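/- Let n ≥ 1, R > 0, C₀ > 0, and let g : {x ∈ ℝⁿ : |x| ≥ R} → ℝ≥0 be a smooth function of polynomial growth (g(x) = O(|x|^N) for some N) satisfying −Δg ≤ −C₀ g, i.e. Δg ≥ C₀ g, where Δ is the (geometer's negative of the) standard Laplacian so that the hypothesis reads (−Σ ∂²_{x_i}) g ≤ −C₀ g. Then there exists ε₁ > 0, depending only on C₀ (and n), such that g(x) = O(exp(−ε₁ |x|)) as |x| → ∞. -/

import Mathlib

open Real Filter Topology Set Finset

local notation "⟪" x ", " y "⟫" => @inner ℝ _ _ x y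

section Helpers

variable {E : Type*} [NormedAddCommGroup E] [InnerProductSpace ℝ E]

lemma expL_contDiff (v : E) : ContDiff ℝ 2 (fun x : E => Real.exp ⟪v, x⟫) :=
  Real.contDiff_exp.comp ((innerSL ℝ v).contDiff)

lemma expL_hasFDerivAt (v x : E) :
    HasFDerivAt (fun x : E => Real.exp ⟪v, x⟫) (Real.exp ⟪v, x⟫ • (innerSL ℝ v)) x :=
  (Real.hasDerivAt_exp ⟪v, x⟫).comp_hasFDerivAt x (innerSL ℝ v).hasFDerivAt

lemma expL_fderiv (v : E) :
    (fderiv ℝ (fun x : E => Real.exp ⟪v, x⟫)) = fun x => Real.exp ⟪v, x⟫ • (innerSL ℝ v) :=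
  funext fun x => (expL_hasFDerivAt v x).fderiv

lemma expL_second (v x a b : E) :
    iteratedFDeriv ℝ 2 (fun x : E => Real.exp ⟪v, x⟫) x ![a, b]
      = ⟪v, a⟫ * ⟪v, b⟫ * Real.exp ⟪v, x⟫ := by
  rw [iteratedFDeriv_two_apply, expL_fderiv]
  have h2 : HasFDerivAt (fun x : E => Real.exp ⟪v, x⟫ • (innerSL ℝ v))
      ((Real.exp ⟪v, x⟫ • (innerSL ℝ v)).smulRight (innerSL ℝ v)) x :=
    (expL_hasFDerivAt v x).smul_const (innerSL ℝ v)
  rw [h2.fderiv]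
  simp [Matrix.cons_val_zero, Matrix.cons_val_one]
  ring

end Helpers

section SDT

variable {E : Type*} [NormedAddCommGroup E] [NormedSpace ℝ E]

lemma one_dim_test {q : ℝ → ℝ} (hq : Differentiable ℝ q) (hmax : IsLocalMax q 0)
    {c : ℝ} (hd : HasDerivAt (deriv q) c 0) : c ≤ 0 := by
  by_contra hc
  push_neg at hc
  have h0 : deriv q 0 = 0 := hmax.deriv_eq_zero
  have hslope : Tendsto (slope (deriv q) 0) (𝓝[>] 0) (𝓝 c) :=
    (hasDerivAt_iff_tendsto_slope.1 hd).mono_left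
      (nhdsWithin_mono _ (fun t (ht : t ∈ Ioi (0:ℝ)) => ne_of_gt ht))
  have hpos : ∀ᶠ t in 𝓝[>] (0:ℝ), 0 < deriv q t := by
    filter_upwards [hslope.eventually (eventually_gt_nhds (half_lt_self hc)),
      self_mem_nhdsWithin] with t ht (ht0 : 0 < t)
    have hs : 0 < slope (deriv q) 0 t := lt_trans (by positivity) ht
    rw [slope_def_field, h0, sub_zero, sub_zero] at hs
    exact (div_pos_iff.1 hs).resolve_right (fun h => absurd ht0 (not_lt.2 h.2.le)) |>.1
  obtain ⟨δ₁, hδ₁, h1⟩ := mem_nhdsGT_iff_exists_Ioo_subset.1 hpos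
  obtain ⟨δ₂, hδ₂, h2⟩ := Metric.eventually_nhds_iff_ball.1 hmax
  set δ := min δ₁ δ₂ / 2 with hδdef
  have hmin : 0 < min δ₁ δ₂ := lt_min hδ₁ hδ₂
  have hδpos : 0 < δ := by positivity
  have hmono : StrictMonoOn q (Icc 0 δ) := by
    apply strictMonoOn_of_deriv_pos (convex_Icc _ _) hq.continuous.continuousOn
    intro t ht
    rw [interior_Icc] at ht
    exact h1 ⟨ht.1, lt_of_lt_of_le ht.2 (by
      calc δ ≤ min δ₁ δ₂ := by rw [hδdef]; linarith
      _ ≤ δ₁ := min_le_left _ _)⟩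
  have hlt : q 0 < q δ := hmono (left_mem_Icc.2 hδpos.le) (right_mem_Icc.2 hδpos.le) hδpos
  have : q δ ≤ q 0 := h2 δ (by
    rw [Metric.mem_ball, dist_zero_right, Real.norm_eq_abs, abs_of_pos hδpos]
    calc δ < min δ₁ δ₂ := by rw [hδdef]; linarith
    _ ≤ δ₂ := min_le_right _ _)
  linarith

lemma second_deriv_test {u : E → ℝ} (hu : ContDiff ℝ 2 u) {x₀ : E}
    (hmax : IsLocalMax u x₀) (a : E) : iteratedFDeriv ℝ 2 u x₀ ![a, a] ≤ 0 := by
  have hu1 : ContDiff ℝ 1 (fderiv ℝ u) :=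
    (contDiff_succ_iff_fderiv.1 (show ContDiff ℝ (1+1) u by norm_num; exact hu)).2.2
  have hud : Differentiable ℝ u := hu.differentiable (by norm_num)
  set γ : ℝ → E := fun t => x₀ + t • a with hγ
  have hγd : ∀ t, HasDerivAt γ a t := fun t => by
    have h := ((hasDerivAt_id t).smul_const a).const_add x₀
    rw [one_smul] at h
    exact h
  set q : ℝ → ℝ := fun t => u (γ t) with hq
  have hqd : ∀ t, HasDerivAt q (fderiv ℝ u (γ t) a) t := fun t =>
    (hud (γ t)).hasFDerivAt.comp_hasDerivAt t (hγd t)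
  have hqdiff : Differentiable ℝ q := fun t => (hqd t).differentiableAt
  have hderivq : deriv q = fun t => fderiv ℝ u (γ t) a := funext fun t => (hqd t).deriv
  have hγ0 : γ 0 = x₀ := by simp [hγ]
  have hqmax : IsLocalMax q 0 := by
    have hcont : ContinuousAt γ 0 := (hγd 0).continuousAt
    have h := hcont.tendsto.eventually (by rw [hγ0]; exact hmax)
    unfold IsLocalMax IsMaxFilter
    simpa [hq, hγ0] using h
  set D : E → ℝ := fun y => (ContinuousLinearMap.apply ℝ ℝ a) (fderiv ℝ u y) with hD
  have hDfd : HasFDerivAt D ((ContinuousLinearMap.apply ℝ ℝ a).comp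
      (fderiv ℝ (fderiv ℝ u) x₀)) x₀ :=
    ((ContinuousLinearMap.apply ℝ ℝ a).hasFDerivAt).comp x₀
      ((hu1.differentiable (by norm_num)) x₀).hasFDerivAt
  have h2 : HasDerivAt (deriv q) (fderiv ℝ (fderiv ℝ u) x₀ a a) 0 := by
    rw [hderivq]
    have h := (show HasFDerivAt D _ (γ 0) by rw [hγ0]; exact hDfd).comp_hasDerivAt 0 (hγd 0)
    have h2 : HasDerivAt (fun t => D (γ t))
        (((ContinuousLinearMap.apply ℝ ℝ a).comp (fderiv ℝ (fderiv ℝ u) x₀)) a) 0 := by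
      exact h
    simpa [hD] using h2
  have := one_dim_test hqdiff hqmax h2
  rwa [iteratedFDeriv_two_apply]

end SDT

lemma iteratedFDeriv_finset_sum {E : Type*} [NormedAddCommGroup E] [NormedSpace ℝ E]
    {ι : Type*} (s : Finset ι) {f : ι → E → ℝ} (h : ∀ k ∈ s, ContDiff ℝ 2 (f k)) (x : E)
    (m : Fin 2 → E) :
    iteratedFDeriv ℝ 2 (fun y => ∑ k ∈ s, f k y) x m
      = ∑ k ∈ s, iteratedFDeriv ℝ 2 (f k) x m := by
  induction s using Finset.cons_induction with
  | empty => simp [iteratedFDeriv_zero_fun]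
  | cons a s ha ih =>
    simp only [Finset.sum_cons]
    rw [iteratedFDeriv_add_apply' (h a (Finset.mem_cons_self a s)).contDiffAt
      (ContDiff.sum fun k hk => h k (Finset.mem_cons_of_mem hk)).contDiffAt,
      ContinuousMultilinearMap.add_apply,
      ih (fun k hk => h k (Finset.mem_cons_of_mem hk))]

variable {n : ℕ}

lemma inner_single_sq_sum (v : EuclideanSpace ℝ (Fin n)) :
    ∑ i, ⟪v, EuclideanSpace.single i (1:ℝ)⟫ * ⟪v, EuclideanSpace.single i (1:ℝ)⟫
      = ‖v‖ ^ 2 := by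
  have h : ∀ i, ⟪v, EuclideanSpace.single i (1:ℝ)⟫ = v i := by
    intro i; simp [EuclideanSpace.inner_single_right]
  simp_rw [h]
  rw [← real_inner_self_eq_norm_sq]
  simp only [PiLp.inner_apply, RCLike.inner_apply, conj_trivial, mul_comm]

lemma exists_coord (x : EuclideanSpace ℝ (Fin n)) (hn : 1 ≤ n) :
    ∃ j, ‖x‖ ≤ Real.sqrt n * |x j| := by
  have hne : (Finset.univ : Finset (Fin n)).Nonempty := ⟨⟨0, hn⟩, Finset.mem_univ _⟩
  obtain ⟨j, -, hj⟩ := Finset.exists_max_image Finset.univ (fun i => |x i|) hne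
  refine ⟨j, ?_⟩
  have h1 : ‖x‖ ^ 2 ≤ n * |x j| ^ 2 := by
    rw [← real_inner_self_eq_norm_sq]
    simp only [PiLp.inner_apply, RCLike.inner_apply, conj_trivial]
    calc ∑ i, x i * x i ≤ ∑ _i : Fin n, |x j| ^ 2 := by
          apply Finset.sum_le_sum
          intro i _
          have hji := hj i (Finset.mem_univ i)
          calc x i * x i = |x i| ^ 2 := by rw [sq_abs]; ring
          _ ≤ |x j| ^ 2 := pow_le_pow_left₀ (abs_nonneg _) hji 2
        _ = n * |x j| ^ 2 := by simp [Finset.sum_const, nsmul_eq_mul]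
  have h2 : ‖x‖ ≤ Real.sqrt ((n:ℝ) * |x j| ^ 2) := (Real.le_sqrt (norm_nonneg x) (by positivity)).2 h1
  rwa [Real.sqrt_mul (Nat.cast_nonneg n), Real.sqrt_sq_eq_abs, abs_abs] at h2

/-- sum of second derivatives of an exponential barrier. -/
lemma expL_laplace (v x : EuclideanSpace ℝ (Fin n)) :
    ∑ i, iteratedFDeriv ℝ 2 (fun y : EuclideanSpace ℝ (Fin n) => Real.exp ⟪v, y⟫) x
        ![EuclideanSpace.single i 1, EuclideanSpace.single i 1]
      = ‖v‖ ^ 2 * Real.exp ⟪v, x⟫ := by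
  simp_rw [expL_second]
  rw [← Finset.sum_mul, inner_single_sq_sum]

set_option maxHeartbeats 1000000 in
/-- Ahlfors type lemma: a nonnegative function of polynomial growth on
`{x : |x| ≥ R}` satisfying `Δ g ≤ -C₀ g` (with `Δ = -∑ ∂²`) decays like
`exp (-ε₁ |x|)` for some `ε₁ > 0`. -/
theorem ahlfors_type_decay (n : ℕ) (hn : 1 ≤ n) (R C₀ : ℝ) (hR : 0 < R) (hC₀ : 0 < C₀)
    (g : EuclideanSpace ℝ (Fin n) → ℝ) (hg : ContDiff ℝ 2 g)
    (hgnn : ∀ x, R ≤ ‖x‖ → 0 ≤ g x)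
    (hpoly : ∃ (N : ℕ) (C : ℝ), ∀ x, R ≤ ‖x‖ → g x ≤ C * ‖x‖ ^ N)
    (hsub : ∀ x, R ≤ ‖x‖ →
      -(∑ i, iteratedFDeriv ℝ 2 g x
          ![EuclideanSpace.single i 1, EuclideanSpace.single i 1]) ≤ -C₀ * g x) :
    ∃ ε₁ > (0:ℝ), ∃ C : ℝ, ∀ x, R ≤ ‖x‖ → g x ≤ C * Real.exp (-ε₁ * ‖x‖) := by
  classical
  obtain ⟨N, C, hNC⟩ := hpoly
  set ε := Real.sqrt C₀ with hεdef
  have hε : 0 < ε := Real.sqrt_pos.2 hC₀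
  have hε2 : ε ^ 2 = C₀ := Real.sq_sqrt hC₀.le
  -- a point on the sphere
  set e₀ : EuclideanSpace ℝ (Fin n) := EuclideanSpace.single (⟨0, hn⟩ : Fin n) (1:ℝ) with he₀
  have he₀n : ‖e₀‖ = 1 := by simp [he₀, EuclideanSpace.norm_single]
  have hsphne : (Metric.sphere (0:EuclideanSpace ℝ (Fin n)) R).Nonempty := by
    refine ⟨R • e₀, ?_⟩
    simp [norm_smul, he₀n, abs_of_pos hR]
  -- bound on the inner sphere
  obtain ⟨y₀, hy₀s, hy₀⟩ := (isCompact_sphere (0:EuclideanSpace ℝ (Fin n)) R).exists_isMaxOn hsphne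
    hg.continuous.continuousOn
  set M := g y₀ with hM
  have hMnn : 0 ≤ M := hgnn y₀ (by
    have := mem_sphere_zero_iff_norm.1 hy₀s; linarith)
  set A := (M + 1) * Real.exp (ε * R) with hA
  have hApos : 0 < A := by positivity
  -- the key comparison
  have key : ∀ u : EuclideanSpace ℝ (Fin n), ‖u‖ = 1 → ∀ x, R ≤ ‖x‖ → g x ≤ A * Real.exp (-(ε * ⟪u, x⟫)) := by
    intro u hu
    set v₀ : EuclideanSpace ℝ (Fin n) := (-ε) • u with hv₀
    have hv₀n : ‖v₀‖ ^ 2 = C₀ := by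
      rw [hv₀, norm_smul]; simp [hu, abs_of_pos hε, hε2]
    set φ : EuclideanSpace ℝ (Fin n) → ℝ := fun y => A * Real.exp ⟪v₀, y⟫ with hφ
    set ψ : EuclideanSpace ℝ (Fin n) → ℝ := fun y => ∑ j,
        (Real.exp ⟪ε • EuclideanSpace.single j (1:ℝ), y⟫
          + Real.exp ⟪(-ε) • EuclideanSpace.single j (1:ℝ), y⟫) with hψ
    have hψC : ContDiff ℝ 2 ψ := ContDiff.sum fun j _ =>
      (expL_contDiff _).add (expL_contDiff _)
    have hφC : ContDiff ℝ 2 φ := (expL_contDiff v₀).const_smul A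
    have hψpos : ∀ y, 0 < ψ y := by
      intro y
      refine Finset.sum_pos (fun j _ => by positivity) ⟨⟨0, hn⟩, Finset.mem_univ _⟩
    have hψnn : ∀ y, 0 ≤ ψ y := fun y => (hψpos y).le
    have hφnn : ∀ y, 0 ≤ φ y := fun y => by positivity
    -- lower bound for ψ
    have hψlow : ∀ y : EuclideanSpace ℝ (Fin n), Real.exp (ε * ‖y‖ / Real.sqrt n) ≤ ψ y := by
      intro y
      obtain ⟨j, hj⟩ := exists_coord y hn
      have hsn : (0:ℝ) < Real.sqrt n := Real.sqrt_pos.2 (by exact_mod_cast hn)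
      have h1 : ε * ‖y‖ / Real.sqrt n ≤ ε * |y j| := by
        rw [div_le_iff₀ hsn]
        calc ε * ‖y‖ ≤ ε * (Real.sqrt n * |y j|) := by
              exact mul_le_mul_of_nonneg_left hj hε.le
        _ = ε * |y j| * Real.sqrt n := by ring
      have h2 : Real.exp (ε * |y j|) ≤ Real.exp ⟪ε • EuclideanSpace.single j (1:ℝ), y⟫
          + Real.exp ⟪(-ε) • EuclideanSpace.single j (1:ℝ), y⟫ := by
        have hi1 : ⟪ε • EuclideanSpace.single j (1:ℝ), y⟫ = ε * y j := by
          rw [real_inner_smul_left]; simp [EuclideanSpace.inner_single_left]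
        have hi2 : ⟪(-ε) • EuclideanSpace.single j (1:ℝ), y⟫ = -(ε * y j) := by
          rw [real_inner_smul_left]; simp [EuclideanSpace.inner_single_left]
        rw [hi1, hi2]
        rcases abs_cases (y j) with ⟨h, _⟩ | ⟨h, _⟩
        · rw [h]; linarith [Real.exp_pos (-(ε * y j))]
        · rw [h, mul_neg]; linarith [Real.exp_pos (ε * y j)]
      calc Real.exp (ε * ‖y‖ / Real.sqrt n) ≤ Real.exp (ε * |y j|) := Real.exp_le_exp.2 h1
      _ ≤ _ := h2
      _ ≤ ψ y := by
        rw [hψ]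
        exact Finset.single_le_sum (f := fun j => Real.exp ⟪ε • EuclideanSpace.single j (1:ℝ), y⟫
          + Real.exp ⟪(-ε) • EuclideanSpace.single j (1:ℝ), y⟫)
          (fun i _ => by positivity) (Finset.mem_univ j)
    -- Laplacian identities
    have hφlap : ∀ y : EuclideanSpace ℝ (Fin n), ∑ i, iteratedFDeriv ℝ 2 φ y
        ![EuclideanSpace.single i 1, EuclideanSpace.single i 1] = C₀ * φ y := by
      intro y
      have : ∀ i : Fin n, iteratedFDeriv ℝ 2 φ y
          ![EuclideanSpace.single i 1, EuclideanSpace.single i 1]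
          = A * iteratedFDeriv ℝ 2 (fun z : EuclideanSpace ℝ (Fin n) => Real.exp ⟪v₀, z⟫) y
            ![EuclideanSpace.single i 1, EuclideanSpace.single i 1] := by
        intro i
        rw [show φ = A • (fun z : EuclideanSpace ℝ (Fin n) => Real.exp ⟪v₀, z⟫) from rfl,
          iteratedFDeriv_const_smul_apply (expL_contDiff v₀).contDiffAt]
        rfl
      simp_rw [this, ← Finset.mul_sum, expL_laplace, hv₀n, hφ]
      ring
    have hψlap : ∀ y : EuclideanSpace ℝ (Fin n), ∑ i, iteratedFDeriv ℝ 2 ψ y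
        ![EuclideanSpace.single i 1, EuclideanSpace.single i 1] = C₀ * ψ y := by
      intro y
      have hterm : ∀ (i : Fin n), iteratedFDeriv ℝ 2 ψ y
          ![EuclideanSpace.single i 1, EuclideanSpace.single i 1]
          = ∑ j, (iteratedFDeriv ℝ 2 (fun z : EuclideanSpace ℝ (Fin n) => Real.exp ⟪ε • EuclideanSpace.single j (1:ℝ), z⟫) y
              ![EuclideanSpace.single i 1, EuclideanSpace.single i 1]
            + iteratedFDeriv ℝ 2 (fun z : EuclideanSpace ℝ (Fin n) => Real.exp ⟪(-ε) • EuclideanSpace.single j (1:ℝ), z⟫) y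
              ![EuclideanSpace.single i 1, EuclideanSpace.single i 1]) := by
        intro i
        rw [hψ, iteratedFDeriv_finset_sum _ (fun j _ => (expL_contDiff _).add (expL_contDiff _))]
        refine Finset.sum_congr rfl fun j _ => ?_
        rw [iteratedFDeriv_add_apply' (expL_contDiff _).contDiffAt (expL_contDiff _).contDiffAt]
        rfl
      simp_rw [hterm]
      rw [Finset.sum_comm]
      have hnorm : ∀ (j : Fin n) (c : ℝ), c = ε ∨ c = -ε →
          ‖c • EuclideanSpace.single j (1:ℝ)‖ ^ 2 = C₀ := by
        intro j c hc
        rw [norm_smul]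
        have h1 : ‖EuclideanSpace.single j (1:ℝ)‖ = 1 := by
          simp [EuclideanSpace.norm_single]
        have h2 : ‖c‖ = ε := by
          rcases hc with h | h <;> rw [h] <;>
            simp [Real.norm_eq_abs, abs_of_pos hε]
        rw [h1, h2, mul_one, hε2]
      calc ∑ j : Fin n, ∑ i : Fin n, _ = ∑ j : Fin n,
          (C₀ * Real.exp ⟪ε • EuclideanSpace.single j (1:ℝ), y⟫
            + C₀ * Real.exp ⟪(-ε) • EuclideanSpace.single j (1:ℝ), y⟫) := by
            refine Finset.sum_congr rfl fun j _ => ?_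
            rw [Finset.sum_add_distrib, expL_laplace, expL_laplace,
              hnorm j ε (Or.inl rfl), hnorm j (-ε) (Or.inr rfl)]
      _ = C₀ * ψ y := by
            rw [hψ, Finset.mul_sum]
            exact Finset.sum_congr rfl fun j _ => by ring
    -- the η-approximation step
    have hηstep : ∀ η : ℝ, 0 < η → ∀ x : EuclideanSpace ℝ (Fin n), R ≤ ‖x‖ → g x ≤ φ x + η * ψ x := by
      intro η hη x hx
      set B : EuclideanSpace ℝ (Fin n) → ℝ := fun y => φ y + η * ψ y with hB
      have hBC : ContDiff ℝ 2 B := hφC.add (hψC.const_smul η)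
      set w : EuclideanSpace ℝ (Fin n) → ℝ := fun y => g y - B y with hw
      have hwC : ContDiff ℝ 2 w := hg.sub hBC
      have hwlap : ∀ y (i : Fin n), iteratedFDeriv ℝ 2 w y
          ![EuclideanSpace.single i 1, EuclideanSpace.single i 1]
          = iteratedFDeriv ℝ 2 g y ![EuclideanSpace.single i 1, EuclideanSpace.single i 1]
            - (iteratedFDeriv ℝ 2 φ y ![EuclideanSpace.single i 1, EuclideanSpace.single i 1]
              + η * iteratedFDeriv ℝ 2 ψ y ![EuclideanSpace.single i 1, EuclideanSpace.single i 1]) := by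
        intro y i
        have hwdef : w = g + (-B) := by funext z; simp [hw, sub_eq_add_neg]
        have hBdef : B = φ + η • ψ := by funext z; simp [hB, smul_eq_mul]
        have hBneg : ContDiff ℝ 2 (-B) := by rw [show -B = fun z => -B z from rfl]; exact hBC.neg
        have hηψ : ContDiff ℝ 2 (η • ψ) := by
          rw [show η • ψ = fun z => η • ψ z from rfl]; exact hψC.const_smul η
        rw [hwdef, iteratedFDeriv_add_apply hg.contDiffAt hBneg.contDiffAt, ContinuousMultilinearMap.add_apply,
          iteratedFDeriv_neg_apply, ContinuousMultilinearMap.neg_apply]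
        have h3 : iteratedFDeriv ℝ 2 B y ![EuclideanSpace.single i 1, EuclideanSpace.single i 1]
            = iteratedFDeriv ℝ 2 φ y ![EuclideanSpace.single i 1, EuclideanSpace.single i 1]
              + η * iteratedFDeriv ℝ 2 ψ y ![EuclideanSpace.single i 1, EuclideanSpace.single i 1] := by
          rw [hBdef, iteratedFDeriv_add_apply hφC.contDiffAt hηψ.contDiffAt,
            ContinuousMultilinearMap.add_apply,
            iteratedFDeriv_const_smul_apply hψC.contDiffAt]
          rfl
        rw [h3]; ring
      have hwB : ∀ y, R ≤ ‖y‖ → C₀ * w y ≤ ∑ i, iteratedFDeriv ℝ 2 w y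
          ![EuclideanSpace.single i 1, EuclideanSpace.single i 1] := by
        intro y hy
        have hs := hsub y hy
        have hglap : C₀ * g y ≤ ∑ i, iteratedFDeriv ℝ 2 g y
            ![EuclideanSpace.single i 1, EuclideanSpace.single i 1] := by linarith
        calc C₀ * w y = C₀ * g y - (C₀ * φ y + η * (C₀ * ψ y)) := by rw [hw, hB]; ring
        _ ≤ (∑ i, iteratedFDeriv ℝ 2 g y ![EuclideanSpace.single i 1, EuclideanSpace.single i 1])
            - ((∑ i, iteratedFDeriv ℝ 2 φ y ![EuclideanSpace.single i 1, EuclideanSpace.single i 1])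
              + η * (∑ i, iteratedFDeriv ℝ 2 ψ y ![EuclideanSpace.single i 1, EuclideanSpace.single i 1])) := by
            rw [hφlap y, hψlap y]; linarith
        _ = ∑ i, iteratedFDeriv ℝ 2 w y ![EuclideanSpace.single i 1, EuclideanSpace.single i 1] := by
            simp_rw [hwlap]
            rw [Finset.sum_sub_distrib, Finset.sum_add_distrib, Finset.mul_sum]
      -- choose the outer radius S
      have hsn : (0:ℝ) < Real.sqrt n := Real.sqrt_pos.2 (by exact_mod_cast hn)
      set c : ℝ := ε / Real.sqrt n with hc
      have hcpos : 0 < c := by positivity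
      set C' : ℝ := max C 1 with hC'
      have hC'pos : 0 < C' := lt_of_lt_of_le one_pos (le_max_right _ _)
      have htend : Tendsto (fun S : ℝ => (c * S) ^ N * Real.exp (-(c * S))) atTop (𝓝 0) :=
        (tendsto_pow_mul_exp_neg_atTop_nhds_zero N).comp
          (Tendsto.const_mul_atTop hcpos tendsto_id)
      have hev : ∀ᶠ S in (atTop : Filter ℝ), C' * S ^ N ≤ η * Real.exp (c * S) := by
        have hev1 := htend.eventually (eventually_lt_nhds (show (0:ℝ) < η * c ^ N / C' by positivity))
        filter_upwards [hev1, eventually_ge_atTop (0:ℝ)] with S hS hS0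
        have hepos : 0 < Real.exp (c * S) := Real.exp_pos _
        have hcn : (0:ℝ) < c ^ N := by positivity
        have hexp : Real.exp (-(c * S)) * Real.exp (c * S) = 1 := by
          rw [← Real.exp_add]; simp
        have h1 : (c * S) ^ N < η * c ^ N / C' * Real.exp (c * S) := by
          have h := mul_lt_mul_of_pos_right hS hepos
          rwa [mul_assoc, hexp, mul_one] at h
        rw [mul_pow] at h1
        have h2 : c ^ N * (C' * S ^ N) < c ^ N * (η * Real.exp (c * S)) := by
          calc c ^ N * (C' * S ^ N) = C' * (c ^ N * S ^ N) := by ring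
          _ < C' * (η * c ^ N / C' * Real.exp (c * S)) :=
              mul_lt_mul_of_pos_left h1 hC'pos
          _ = c ^ N * (η * Real.exp (c * S)) := by field_simp
        exact le_of_lt ((mul_lt_mul_iff_right₀ hcn).1 h2)
      obtain ⟨S, hS⟩ := (hev.and (eventually_ge_atTop (max (max ‖x‖ R) 1))).exists
      obtain ⟨hSev, hSge⟩ := hS
      have hSx : ‖x‖ ≤ S := le_trans (le_trans (le_max_left _ _) (le_max_left _ _)) hSge
      have hSR : R ≤ S := le_trans (le_trans (le_max_right _ _) (le_max_left _ _)) hSge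
      have hS1 : (1:ℝ) ≤ S := le_trans (le_max_right _ _) hSge
      -- the compact annulus
      set K : Set (EuclideanSpace ℝ (Fin n)) := Metric.closedBall 0 S ∩ {y : EuclideanSpace ℝ (Fin n) | R ≤ ‖y‖} with hK
      have hKc : IsCompact K := by
        apply (isCompact_closedBall (0:EuclideanSpace ℝ (Fin n)) S).of_isClosed_subset
        · exact (Metric.isClosed_closedBall).inter (isClosed_le continuous_const continuous_norm)
        · exact Set.inter_subset_left
      have hxK : x ∈ K := ⟨Metric.mem_closedBall.2 (by simpa using hSx), hx⟩
      obtain ⟨x₀, hx₀K, hx₀max⟩ := hKc.exists_isMaxOn ⟨x, hxK⟩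
        (hwC.continuous.continuousOn)
      by_contra hcon
      push_neg at hcon
      have hwx : 0 < w x := by simp [hw, hB]; linarith
      have hwx₀ : 0 < w x₀ := lt_of_lt_of_le hwx (hx₀max hxK)
      have hx₀R : R ≤ ‖x₀‖ := hx₀K.2
      have hx₀S : ‖x₀‖ ≤ S := by simpa using Metric.mem_closedBall.1 hx₀K.1
      -- not on inner boundary
      have hinner : R < ‖x₀‖ := by
        rcases lt_or_eq_of_le hx₀R with h | h
        · exact h
        · exfalso
          have hgx₀ : g x₀ ≤ M := hy₀ (by simp [mem_sphere_zero_iff_norm, ← h])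
          have hip : ⟪u, x₀⟫ ≤ R := by
            calc ⟪u, x₀⟫ ≤ ‖u‖ * ‖x₀‖ := real_inner_le_norm u x₀
            _ = R := by rw [hu, ← h]; ring
          have hφx₀ : (M + 1) ≤ φ x₀ := by
            have hv : ⟪v₀, x₀⟫ = -(ε * ⟪u, x₀⟫) := by
              rw [hv₀, real_inner_smul_left]; ring
            show M + 1 ≤ A * Real.exp ⟪v₀, x₀⟫
            rw [hv, hA, mul_assoc, ← Real.exp_add]
            calc M + 1 = (M + 1) * Real.exp 0 := by simp
            _ ≤ (M + 1) * Real.exp (ε * R + -(ε * ⟪u, x₀⟫)) := by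
                apply mul_le_mul_of_nonneg_left _ (by linarith)
                apply Real.exp_le_exp.2
                nlinarith
          have : w x₀ ≤ M - (M + 1) := by
            simp only [hw, hB]
            have := mul_nonneg hη.le (hψnn x₀)
            linarith
          linarith
      -- not on outer boundary
      have houter : ‖x₀‖ < S := by
        rcases lt_or_eq_of_le hx₀S with h | h
        · exact h
        · exfalso
          have hgx₀ : g x₀ ≤ C' * S ^ N := by
            calc g x₀ ≤ C * ‖x₀‖ ^ N := hNC x₀ hx₀R
            _ ≤ C' * S ^ N := by
                rw [h]
                apply mul_le_mul (le_max_left _ _) le_rfl (by positivity)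
                  hC'pos.le
          have hψx₀ : Real.exp (c * S) ≤ ψ x₀ := by
            have := hψlow x₀
            rw [h] at this
            calc Real.exp (c * S) = Real.exp (ε * S / Real.sqrt n) := by rw [hc]; ring_nf
            _ ≤ ψ x₀ := this
          have : w x₀ ≤ 0 := by
            simp only [hw, hB]
            have h1 : η * Real.exp (c * S) ≤ η * ψ x₀ := mul_le_mul_of_nonneg_left hψx₀ hη.le
            have h2 := hφnn x₀
            linarith [hSev]
          linarith
      -- interior local max
      have hloc : IsLocalMax w x₀ := by
        have hρ : 0 < min (‖x₀‖ - R) (S - ‖x₀‖) := lt_min (by linarith) (by linarith)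
        have hball : Metric.ball x₀ (min (‖x₀‖ - R) (S - ‖x₀‖)) ⊆ K := by
          intro y hy
          rw [Metric.mem_ball, dist_eq_norm] at hy
          constructor
          · rw [Metric.mem_closedBall, dist_zero_right]
            calc ‖y‖ ≤ ‖x₀‖ + ‖y - x₀‖ := by
                  simpa using norm_add_le (y - x₀) x₀ |>.trans_eq (by ring_nf)
            _ ≤ ‖x₀‖ + (S - ‖x₀‖) := by linarith [lt_of_lt_of_le hy (min_le_right _ _)]
            _ = S := by ring
          · show R ≤ ‖y‖
            have h1 : ‖x₀‖ - ‖y‖ ≤ ‖x₀ - y‖ := by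
              simpa using norm_sub_norm_le x₀ y
            have h2 : ‖x₀ - y‖ = ‖y - x₀‖ := norm_sub_rev _ _
            linarith [lt_of_lt_of_le hy (min_le_left _ _)]
        filter_upwards [Metric.ball_mem_nhds x₀ hρ] with y hy
        exact hx₀max (hball hy)
      -- contradiction via the maximum principle
      have hlap_le : ∑ i, iteratedFDeriv ℝ 2 w x₀
          ![EuclideanSpace.single i 1, EuclideanSpace.single i 1] ≤ 0 :=
        Finset.sum_nonpos fun i _ => second_deriv_test hwC hloc _
      have h0 : C₀ * w x₀ ≤ 0 := le_trans (hwB x₀ hx₀R) hlap_le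
      exact absurd h0 (not_le.2 (mul_pos hC₀ hwx₀))
    -- let η → 0
    intro x hx
    have hle : g x ≤ φ x := by
      by_contra hlt
      push_neg at hlt
      have hd : 0 < g x - φ x := by linarith
      have hψx := hψpos x
      have h2 := hηstep ((g x - φ x) / (2 * ψ x)) (div_pos hd (by linarith)) x hx
      have heq : (g x - φ x) / (2 * ψ x) * ψ x = (g x - φ x) / 2 := by
        rw [div_mul_eq_mul_div, mul_comm (g x - φ x) (ψ x), mul_comm 2 (ψ x),
          mul_div_mul_left _ _ (ne_of_gt hψx)]
      rw [heq] at h2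
      linarith
    calc g x ≤ φ x := hle
    _ = A * Real.exp (-(ε * ⟪u, x⟫)) := by
      show A * Real.exp ⟪v₀, x⟫ = _
      rw [hv₀, real_inner_smul_left, neg_mul]
  -- conclude
  refine ⟨ε, hε, A, fun x hx => ?_⟩
  have hxpos : 0 < ‖x‖ := lt_of_lt_of_le hR hx
  set u : EuclideanSpace ℝ (Fin n) := ‖x‖⁻¹ • x with hu
  have hun : ‖u‖ = 1 := by
    rw [hu, norm_smul, norm_inv, norm_norm, inv_mul_cancel₀ hxpos.ne']
  have hux : ⟪u, x⟫ = ‖x‖ := by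
    rw [hu, real_inner_smul_left, real_inner_self_eq_norm_sq]
    field_simp
  have := key u hun x hx
  rw [hux] at this
  calc g x ≤ A * Real.exp (-(ε * ‖x‖)) := this
  _ = A * Real.exp (-ε * ‖x‖) := by ring_nf
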